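/- Let ω = exp(2πi/3) and let w = ω·E₃ ∈ U(3) act on the algebra J(3,C) ⊕ M(3,C) by w(X + M) = X + ωM, where J(3,C) is the algebra of 3×3 complex Hermitian matrices. For A, B ∈ SU(3) define φ(B,A)(X + M) = A X A* + B M A*. Then φ : SU(3) × SU(3) → GL(J(3,C) ⊕ M(3,C)) is a group homomorphism, every φ(B,A) commutes with w, and the kernel of φ is {(E,E), (ωE,ωE), (ω²E,ω²E)} ≅ Z_3. -/

import Mathlib

noncomputable section

/-- The special unitary group over index type `I`, as a subgroup of the unitary group. -/
def SU (I : Type) [Fintype I] [DecidableEq I] :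
    Subgroup (Matrix.unitaryGroup I ℂ) :=
  MonoidHom.ker (Matrix.detMonoidHom.comp (Matrix.unitaryGroup I ℂ).subtype)

/-- Underlying matrix of an element of `SU I`. -/
def mat {I : Type} [Fintype I] [DecidableEq I] (A : SU I) : Matrix I I ℂ := A.1.1

/-- `ω = exp(2πi/3)`, a primitive cube root of unity. -/
def ω : ℂ := Complex.exp (2 * Real.pi * Complex.I / 3)

/-- The space `J(3,ℂ) ⊕ M(3,ℂ)`, with the first component intended to range over
Hermitian matrices. -/
abbrev Jpair := Matrix (Fin 3) (Fin 3) ℂ × Matrix (Fin 3) (Fin 3) ℂ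

/-- The action `w(X + M) = X + ωM`. -/
def w (z : Jpair) : Jpair := (z.1, ω • z.2)

/-- The action `φ(B,A)(X + M) = AXA* + BMA*`. -/
def φ (B A : Matrix (Fin 3) (Fin 3) ℂ) (z : Jpair) : Jpair :=
  (A * z.1 * A.conjTranspose, B * z.2 * A.conjTranspose)

lemma ω_cube : ω ^ 3 = 1 := by
  rw [ω, ← Complex.exp_nat_mul]
  rw [show (3:ℕ) * (2 * ↑Real.pi * Complex.I / 3) = 2 * ↑Real.pi * Complex.I by push_cast; ring]
  exact Complex.exp_two_pi_mul_I

lemma ω_ne_one : ω ≠ 1 := by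
  intro h
  rw [ω, Complex.exp_eq_one_iff] at h
  obtain ⟨n, hn⟩ := h
  have h2 : (2 * (Real.pi:ℂ) * Complex.I) ≠ 0 := by
    simp [Real.pi_ne_zero, Complex.I_ne_zero, Complex.ofReal_ne_zero]
  have key : (2 * (Real.pi:ℂ) * Complex.I) * (1 - 3 * n) = 0 := by
    linear_combination 3 * hn
  have h3 : (1:ℂ) - 3 * n = 0 := by
    rcases mul_eq_zero.mp key with h' | h'
    · exact absurd h' h2
    · exact h'
  have h4 : ((3 * n : ℤ) : ℂ) = 1 := by push_cast; linear_combination -h3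
  have h5 : (3 * n : ℤ) = 1 := by exact_mod_cast h4
  omega

lemma ω_mul_star : ω * star ω = 1 := by
  rw [ω, Complex.star_def, ← Complex.exp_conj, ← Complex.exp_add]
  rw [show (starRingEnd ℂ) (2 * ↑Real.pi * Complex.I / 3) = -(2 * ↑Real.pi * Complex.I / 3) by
    simp [map_div₀, Complex.conj_I, map_ofNat]; ring]
  simp

lemma cube_roots {l : ℂ} (h : l ^ 3 = 1) : l = 1 ∨ l = ω ∨ l = ω ^ 2 := by
  have hω3 := ω_cube
  have hs : 1 + ω + ω ^ 2 = 0 := by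
    have hne : ω - 1 ≠ 0 := sub_ne_zero.mpr ω_ne_one
    have h0 : (ω - 1) * (1 + ω + ω ^ 2) = 0 := by linear_combination hω3
    rcases mul_eq_zero.mp h0 with h' | h'
    · exact absurd h' hne
    · exact h'
  have hfac : (l - 1) * ((l - ω) * (l - ω ^ 2)) = 0 := by
    linear_combination h + (l - 1) * hω3 + (l - l ^ 2) * hs
  rcases mul_eq_zero.mp hfac with h' | h'
  · exact Or.inl (sub_eq_zero.mp h')
  · rcases mul_eq_zero.mp h' with h'' | h''
    · exact Or.inr (Or.inl (sub_eq_zero.mp h''))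
    · exact Or.inr (Or.inr (sub_eq_zero.mp h''))

lemma mat_mul (P Q : SU (Fin 3)) : mat (P * Q) = mat P * mat Q := rfl

lemma mat_star_mul (A : SU (Fin 3)) : (mat A).conjTranspose * mat A = 1 := by
  have := A.1.2.1
  rwa [Matrix.star_eq_conjTranspose] at this

lemma mat_mul_star (A : SU (Fin 3)) : mat A * (mat A).conjTranspose = 1 := by
  have := A.1.2.2
  rwa [Matrix.star_eq_conjTranspose] at this

lemma mat_det (A : SU (Fin 3)) : (mat A).det = 1 := A.2

lemma scalar_ker (c : ℂ) (hc : c * star c = 1) (z : Jpair) :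
    φ (c • 1) (c • 1) z = z := by
  have h1 : (c • (1 : Matrix (Fin 3) (Fin 3) ℂ)).conjTranspose =
      star c • (1 : Matrix (Fin 3) (Fin 3) ℂ) := by simp
  have hc' : star c * c = 1 := by rw [mul_comm]; exact hc
  simp only [φ, h1, Matrix.smul_mul, Matrix.mul_smul, Matrix.one_mul, Matrix.mul_one,
    smul_smul, hc', one_smul]

/-- `φ : SU(3) × SU(3) → GL(J(3,ℂ) ⊕ M(3,ℂ))` is a group homomorphism, every `φ(B,A)`
commutes with `w` and preserves Hermitian first components, and the kernel of `φ` is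
`{(E,E), (ωE,ωE), (ω²E,ω²E)} ≅ ℤ₃`. -/
theorem φ_su3_su3_hom_commutes_with_w_kernel_z3 :
    -- `φ` is a group homomorphism into invertible linear maps
    (∀ B₁ A₁ B₂ A₂ : SU (Fin 3), ∀ z : Jpair,
      φ (mat (B₁ * B₂)) (mat (A₁ * A₂)) z =
        φ (mat B₁) (mat A₁) (φ (mat B₂) (mat A₂) z)) ∧
    (∀ B A : SU (Fin 3), Function.Bijective (φ (mat B) (mat A))) ∧
    (∀ B A : SU (Fin 3), ∀ z₁ z₂ : Jpair,
      φ (mat B) (mat A) (z₁ + z₂) = φ (mat B) (mat A) z₁ + φ (mat B) (mat A) z₂) ∧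
    (∀ B A : SU (Fin 3), ∀ (r : ℝ) (z : Jpair),
      φ (mat B) (mat A) (r • z) = r • φ (mat B) (mat A) z) ∧
    -- `φ(B,A)` preserves the Hermitian condition on the first component
    (∀ B A : SU (Fin 3), ∀ z : Jpair, z.1.IsHermitian →
      (φ (mat B) (mat A) z).1.IsHermitian) ∧
    -- every `φ(B,A)` commutes with `w`
    (∀ B A : SU (Fin 3), ∀ z : Jpair,
      φ (mat B) (mat A) (w z) = w (φ (mat B) (mat A) z)) ∧
    -- the kernel of `φ` is `{(E,E), (ωE,ωE), (ω²E,ω²E)}`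
    (∀ B A : SU (Fin 3),
      ((∀ z : Jpair, z.1.IsHermitian → φ (mat B) (mat A) z = z) ↔
        (mat A = 1 ∧ mat B = 1) ∨
        (mat A = ω • 1 ∧ mat B = ω • 1) ∨
        (mat A = ω ^ 2 • 1 ∧ mat B = ω ^ 2 • 1))) := by
  refine ⟨?_, ?_, ?_, ?_, ?_, ?_, ?_⟩
  · intro B₁ A₁ B₂ A₂ z
    simp [φ, mat_mul, Matrix.conjTranspose_mul, Matrix.mul_assoc]
  · intro B A
    refine Function.bijective_iff_has_inverse.mpr
      ⟨φ (mat B).conjTranspose (mat A).conjTranspose, fun z => ?_, fun z => ?_⟩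
    · simp only [φ, Matrix.conjTranspose_conjTranspose]
      rw [show (mat A).conjTranspose * (mat A * z.1 * (mat A).conjTranspose) * mat A
            = ((mat A).conjTranspose * mat A) * z.1 * ((mat A).conjTranspose * mat A) by
          noncomm_ring,
        show (mat B).conjTranspose * (mat B * z.2 * (mat A).conjTranspose) * mat A
            = ((mat B).conjTranspose * mat B) * z.2 * ((mat A).conjTranspose * mat A) by
          noncomm_ring,
        mat_star_mul, mat_star_mul]
      simp
    · simp only [φ, Matrix.conjTranspose_conjTranspose]
      rw [show mat A * ((mat A).conjTranspose * z.1 * mat A) * (mat A).conjTranspose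
            = (mat A * (mat A).conjTranspose) * z.1 * (mat A * (mat A).conjTranspose) by
          noncomm_ring,
        show mat B * ((mat B).conjTranspose * z.2 * mat A) * (mat A).conjTranspose
            = (mat B * (mat B).conjTranspose) * z.2 * (mat A * (mat A).conjTranspose) by
          noncomm_ring,
        mat_mul_star, mat_mul_star]
      simp
  · intro B A z₁ z₂
    simp [φ, Matrix.mul_add, Matrix.add_mul, Prod.ext_iff]
  · intro B A r z
    simp [φ, Matrix.mul_smul, Matrix.smul_mul, Prod.ext_iff]
  · intro B A z hz
    have : (mat A * z.1 * (mat A).conjTranspose).conjTranspose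
        = mat A * z.1 * (mat A).conjTranspose := by
      rw [Matrix.conjTranspose_mul, Matrix.conjTranspose_mul,
        Matrix.conjTranspose_conjTranspose, hz.eq, Matrix.mul_assoc]
    exact this
  · intro B A z
    simp [φ, w, Matrix.mul_smul, Matrix.smul_mul, Prod.ext_iff]
  · intro B A
    constructor
    · intro h
      have h2 : ∀ M : Matrix (Fin 3) (Fin 3) ℂ, mat B * M * (mat A).conjTranspose = M := by
        intro M
        have := h (0, M) Matrix.isHermitian_zero
        exact congrArg Prod.snd this
      have hB1 : mat B * (mat A).conjTranspose = 1 := by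
        have := h2 1; rwa [Matrix.mul_one] at this
      have hBA : mat B = mat A := by
        calc mat B = mat B * ((mat A).conjTranspose * mat A) := by
              rw [mat_star_mul, Matrix.mul_one]
          _ = (mat B * (mat A).conjTranspose) * mat A := by rw [Matrix.mul_assoc]
          _ = mat A := by rw [hB1, Matrix.one_mul]
      have hcomm : ∀ M : Matrix (Fin 3) (Fin 3) ℂ, mat A * M = M * mat A := by
        intro M
        have h3 := h2 M
        rw [hBA] at h3
        calc mat A * M = mat A * M * ((mat A).conjTranspose * mat A) := by
              rw [mat_star_mul, Matrix.mul_one]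
          _ = (mat A * M * (mat A).conjTranspose) * mat A := by
              noncomm_ring
          _ = M * mat A := by rw [h3]
      obtain ⟨l, hl⟩ := Matrix.mem_range_scalar_of_commute_single
        (M := mat A) (fun i j _ => (hcomm _).symm)
      have hl' : mat A = l • 1 := by
        rw [← hl]; ext i j
        by_cases hij : i = j <;>
          simp [Matrix.scalar_apply, Matrix.smul_apply, Matrix.one_apply,
            Matrix.diagonal_apply, hij]
      have hdet : l ^ 3 = 1 := by
        have := mat_det A
        rw [hl'] at this
        simpa [Matrix.det_smul] using this
      rcases cube_roots hdet with h1 | h1 | h1 <;> subst h1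
      · exact Or.inl ⟨by simpa using hl', by rw [hBA]; simpa using hl'⟩
      · exact Or.inr (Or.inl ⟨hl', by rw [hBA, hl']⟩)
      · exact Or.inr (Or.inr ⟨hl', by rw [hBA, hl']⟩)
    · intro h z hz
      have hstar2 : ω ^ 2 * star (ω ^ 2) = 1 := by
        have : star (ω ^ 2) = (star ω) ^ 2 := by rw [star_pow]
        rw [this]
        calc ω ^ 2 * (star ω) ^ 2 = (ω * star ω) ^ 2 := by ring
          _ = 1 := by rw [ω_mul_star]; ring
      rcases h with ⟨hA, hB⟩ | ⟨hA, hB⟩ | ⟨hA, hB⟩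
      · rw [hA, hB]
        rw [show (1 : Matrix (Fin 3) (Fin 3) ℂ) = (1:ℂ) • 1 by simp]
        exact scalar_ker 1 (by simp) z
      · rw [hA, hB]; exact scalar_ker ω ω_mul_star z
      · rw [hA, hB]; exact scalar_ker (ω ^ 2) hstar2 z
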